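/- Let k1, k2, k3, k4 be pairwise distinct positive integers. Then none of the seven vectors v ∈ V satisfies the three equations v1+v2+v3+v4 = 0, k1·v1+k2·v2+k3·v3+k4·v4 = 0, and k1²·v1+k2²·v2+k3²·v3+k4²·v4 = 0 simultaneously; that is, no vector of V lies in the kernel of the 3×4 matrix whose rows are (1,1,1,1), (k1,k2,k3,k4), (k1²,k2²,k3²,k4²). -/
import Mathlib


/-- The family `V` of seven vectors in `ℝ⁴`. -/
def Vfam : Set (Fin 4 → ℝ) :=
  { ![1, 1, -1, -1], ![1, 1, -2, 0], ![1, -1, 0, 0], ![1, 1, 0, 0],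
    ![2, 0, 0, 0], ![1, 1, -1, 0], ![1, 0, 0, 0] }

theorem kernel_avoidance (k : Fin 4 → ℤ) (hk : Function.Injective k)
    (hpos : ∀ j, 0 < k j) :
    ∀ v ∈ Vfam,
      ¬ ((∑ j : Fin 4, v j) = 0 ∧
         (∑ j : Fin 4, (k j : ℝ) * v j) = 0 ∧
         (∑ j : Fin 4, (k j : ℝ) ^ 2 * v j) = 0) := by
  have h02 : (k 0 : ℝ) ≠ (k 2 : ℝ) := by
    exact_mod_cast fun h => absurd (hk h) (by decide)
  have h03 : (k 0 : ℝ) ≠ (k 3 : ℝ) := by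
    exact_mod_cast fun h => absurd (hk h) (by decide)
  have h01 : (k 0 : ℝ) ≠ (k 1 : ℝ) := by
    exact_mod_cast fun h => absurd (hk h) (by decide)
  rintro v hv ⟨h1, h2, h3⟩
  simp only [Vfam, Set.mem_insert_iff, Set.mem_singleton_iff] at hv
  rcases hv with rfl | rfl | rfl | rfl | rfl | rfl | rfl <;>
    simp [Fin.sum_univ_four] at h1 h2 h3
  · -- (1,1,-1,-1)
    have key : ((k 0 : ℝ) - k 2) * ((k 0 : ℝ) - k 3) = 0 := by
      linear_combination ((k 0 : ℝ) - ((k 0 : ℝ) + k 1 + k 2 + k 3) / 2) * h2 + h3 / 2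
    rcases mul_eq_zero.mp key with h | h
    · exact h02 (by linarith)
    · exact h03 (by linarith)
  · -- (1,1,-2,0)
    have key : ((k 0 : ℝ) - k 1) * ((k 0 : ℝ) - k 1) = 0 := by
      linear_combination (-(k 0 : ℝ) - k 1 - 2 * k 2) * h2 + 2 * h3
    rcases mul_eq_zero.mp key with h | h <;> exact h01 (by linarith)
  · -- (1,-1,0,0)
    exact h01 (by linarith)
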